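/- Let p be an odd prime and let α, β ∈ ℤ/pℤ be nonzero. Then the subsets S = {(αn², βn) : n ∈ ℤ/pℤ} and T = {(n, n²) : n ∈ ℤ/pℤ} of (ℤ/pℤ)² are formally dual with respect to the pairing ⟨(a,b),(c,d)⟩ = ζ_p^{ac+bd}: for every (c,d) ∈ (ℤ/pℤ)², |(1/p) ∑_{n ∈ ℤ/pℤ} ζ_p^{cαn² + dβn}|² = (1/p) · #{(w,w') ∈ T × T : (c,d) = w - w'}. -/

import Mathlib

open Complex Finset

lemma aux_exp {p : ℕ} [NeZero p] (x : ZMod p) :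
    Complex.exp (2 * Real.pi * Complex.I * (x.val : ℕ) / p) = ZMod.stdAddChar x := by
  simp [ZMod.stdAddChar_apply, ZMod.toCircle_apply]

lemma aux_conj {p : ℕ} [NeZero p] (x : ZMod p) :
    (starRingEnd ℂ) (ZMod.stdAddChar (N := p) x) = ZMod.stdAddChar (-x) := by
  have h : 0 < ringChar (ZMod p) := by
    rw [ZMod.ringChar_zmod_n]; exact Nat.pos_of_ne_zero (NeZero.ne p)
  rw [AddChar.starComp_apply h, AddChar.inv_apply]

lemma aux_sum_zero {p : ℕ} [NeZero p] {a : ZMod p} (ha : a ≠ 0) :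
    ∑ n : ZMod p, ZMod.stdAddChar (a * n) = 0 := by
  have h := ZMod.isPrimitive_stdAddChar p ha
  simpa using AddChar.sum_eq_zero_of_ne_one h

lemma aux_two (p : ℕ) (hp : p.Prime) (hodd : Odd p) : (2 : ZMod p) ≠ 0 := by
  intro h
  haveI : NeZero p := ⟨hp.ne_zero⟩
  have hd : (p : ℕ) ∣ 2 := (ZMod.natCast_eq_zero_iff 2 p).mp (by exact_mod_cast h)
  have h22 := (Nat.prime_dvd_prime_iff_eq hp Nat.prime_two).mp hd
  rw [h22] at hodd
  simp [Nat.odd_iff] at hodd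

lemma aux_gauss (p : ℕ) (hp : p.Prime) (hodd : Odd p) {a : ZMod p} (ha : a ≠ 0) (b : ZMod p) :
    haveI : Fact p.Prime := ⟨hp⟩
    (∑ n : ZMod p, ZMod.stdAddChar (a * n ^ 2 + b * n)) *
      (starRingEnd ℂ) (∑ n : ZMod p, ZMod.stdAddChar (a * n ^ 2 + b * n)) = p := by
  haveI : Fact p.Prime := ⟨hp⟩
  set ψ := ZMod.stdAddChar (N := p) with hψ
  have h2 : (2 : ZMod p) ≠ 0 := aux_two p hp hodd
  calc (∑ n : ZMod p, ψ (a * n ^ 2 + b * n)) * (starRingEnd ℂ) (∑ n : ZMod p, ψ (a * n ^ 2 + b * n))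
      = ∑ n : ZMod p, ∑ m : ZMod p,
          ψ (a * n ^ 2 + b * n) * ψ (-(a * m ^ 2 + b * m)) := by
        rw [map_sum, sum_mul_sum]
        exact Finset.sum_congr rfl fun n _ => Finset.sum_congr rfl fun m _ => by
          rw [aux_conj]
    _ = ∑ n : ZMod p, ∑ h : ZMod p,
          ψ (2 * a * h * n + (b * h - a * h ^ 2)) := by
        refine Finset.sum_congr rfl fun n _ => ?_
        refine (Fintype.sum_equiv (Equiv.subLeft n)
          (fun h => ψ (2 * a * h * n + (b * h - a * h ^ 2)))
          (fun m => ψ (a * n ^ 2 + b * n) * ψ (-(a * m ^ 2 + b * m))) (fun h => ?_)).symm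
        show ψ (2 * a * h * n + (b * h - a * h ^ 2)) =
          ψ (a * n ^ 2 + b * n) * ψ (-(a * ((Equiv.subLeft n) h) ^ 2 + b * ((Equiv.subLeft n) h)))
        rw [← AddChar.map_add_eq_mul]
        simp only [Equiv.subLeft_apply]
        congr 1
        ring
    _ = ∑ h : ZMod p, (∑ n : ZMod p, ψ (2 * a * h * n)) * ψ (b * h - a * h ^ 2) := by
        rw [Finset.sum_comm]
        refine Finset.sum_congr rfl fun h _ => ?_
        rw [Finset.sum_mul]
        exact Finset.sum_congr rfl fun n _ => (AddChar.map_add_eq_mul ψ _ _)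
    _ = p := by
        rw [Finset.sum_eq_single 0]
        · simp [Finset.card_univ]
        · intro h _ hh
          have : (2 * a * h : ZMod p) ≠ 0 := mul_ne_zero (mul_ne_zero h2 ha) hh
          rw [aux_sum_zero this, zero_mul]
        · simp

lemma aux_card (p : ℕ) [NeZero p] (c d : ZMod p) :
    (((Finset.univ.image fun n : ZMod p => (n, n ^ 2)) ×ˢ
        (Finset.univ.image fun n : ZMod p => (n, n ^ 2))).filter
        fun w : (ZMod p × ZMod p) × (ZMod p × ZMod p) => (c, d) = w.1 - w.2).card =
      (Finset.univ.filter fun nm : ZMod p × ZMod p =>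
        c = nm.1 - nm.2 ∧ d = nm.1 ^ 2 - nm.2 ^ 2).card := by
  refine Finset.card_bij' (fun w _ => (w.1.1, w.2.1))
    (fun nm _ => ((nm.1, nm.1 ^ 2), (nm.2, nm.2 ^ 2))) ?_ ?_ ?_ ?_
  · intro w hw
    simp only [Finset.mem_filter, Finset.mem_product, Finset.mem_image, Finset.mem_univ,
      true_and] at hw ⊢
    obtain ⟨⟨⟨n, hn⟩, ⟨m, hm⟩⟩, hcd⟩ := hw
    rw [← hn, ← hm] at hcd ⊢
    rw [Prod.ext_iff] at hcd
    simpa using hcd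
  · intro nm hnm
    simp only [Finset.mem_filter, Finset.mem_product, Finset.mem_image, Finset.mem_univ,
      true_and] at hnm ⊢
    refine ⟨⟨⟨nm.1, rfl⟩, ⟨nm.2, rfl⟩⟩, ?_⟩
    rw [Prod.ext_iff]
    exact ⟨hnm.1, hnm.2⟩
  · intro w hw
    simp only [Finset.mem_filter, Finset.mem_product, Finset.mem_image, Finset.mem_univ,
      true_and] at hw
    obtain ⟨⟨⟨n, hn⟩, ⟨m, hm⟩⟩, _⟩ := hw
    ext <;> simp [← hn, ← hm]
  · intro nm _
    rfl

theorem stmt_6 (p : ℕ) (hp : p.Prime) (hodd : Odd p)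
    (α β : ZMod p) (hα : α ≠ 0) (hβ : β ≠ 0) :
    haveI : Fact p.Prime := ⟨hp⟩
    ∀ c d : ZMod p,
      ‖(p : ℂ)⁻¹ * ∑ n : ZMod p,
          Complex.exp (2 * Real.pi * Complex.I * ((c * α * n ^ 2 + d * β * n).val) / p)‖ ^ 2 =
        (p : ℝ)⁻¹ * (((Finset.univ.image fun n : ZMod p => (n, n ^ 2)) ×ˢ
            (Finset.univ.image fun n : ZMod p => (n, n ^ 2))).filter
            fun w : (ZMod p × ZMod p) × (ZMod p × ZMod p) => (c, d) = w.1 - w.2).card := by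
  haveI : Fact p.Prime := ⟨hp⟩
  haveI : NeZero p := ⟨hp.ne_zero⟩
  intro c d
  have hpC : (p : ℂ) ≠ 0 := Nat.cast_ne_zero.mpr hp.ne_zero
  have hpR : (p : ℝ) ≠ 0 := Nat.cast_ne_zero.mpr hp.ne_zero
  have h2 : (2 : ZMod p) ≠ 0 := aux_two p hp hodd
  have hsum : (∑ n : ZMod p,
      Complex.exp (2 * Real.pi * Complex.I * ((c * α * n ^ 2 + d * β * n).val) / p)) =
      ∑ n : ZMod p, ZMod.stdAddChar (c * α * n ^ 2 + d * β * n) :=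
    Finset.sum_congr rfl fun n _ => aux_exp _
  rw [hsum, aux_card]
  rcases eq_or_ne c 0 with rfl | hc
  · rcases eq_or_ne d 0 with rfl | hd
    · -- c = 0, d = 0
      have hs : (∑ n : ZMod p, ZMod.stdAddChar ((0 : ZMod p) * α * n ^ 2 + 0 * β * n))
          = (p : ℂ) := by
        simp [Finset.card_univ]
      rw [hs, inv_mul_cancel₀ hpC]
      have hcount : (Finset.univ.filter fun nm : ZMod p × ZMod p =>
          (0 : ZMod p) = nm.1 - nm.2 ∧ (0 : ZMod p) = nm.1 ^ 2 - nm.2 ^ 2)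
          = Finset.univ.image fun n : ZMod p => (n, n) := by
        ext nm
        simp only [Finset.mem_filter, Finset.mem_univ, true_and, Finset.mem_image]
        constructor
        · rintro ⟨h1, -⟩
          have : nm.1 = nm.2 := (eq_of_sub_eq_zero h1.symm)
          exact ⟨nm.1, by rw [Prod.ext_iff]; exact ⟨rfl, this⟩⟩
        · rintro ⟨n, rfl⟩
          simp
      rw [hcount, Finset.card_image_of_injective _ (fun a b h => (Prod.ext_iff.mp h).1),
        Finset.card_univ, ZMod.card]
      simp [inv_mul_cancel₀ hpR]
    · -- c = 0, d ≠ 0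
      have hs : (∑ n : ZMod p, ZMod.stdAddChar ((0 : ZMod p) * α * n ^ 2 + d * β * n))
          = 0 := by
        have := aux_sum_zero (mul_ne_zero hd hβ)
        simpa using this
      rw [hs, mul_zero]
      have hcount : (Finset.univ.filter fun nm : ZMod p × ZMod p =>
          (0 : ZMod p) = nm.1 - nm.2 ∧ d = nm.1 ^ 2 - nm.2 ^ 2) = ∅ := by
        rw [Finset.filter_eq_empty_iff]
        rintro nm - ⟨h1, h2'⟩
        have hnm : nm.1 = nm.2 := eq_of_sub_eq_zero h1.symm
        rw [hnm, sub_self] at h2'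
        exact hd h2'
      rw [hcount]
      simp
  · -- c ≠ 0
    have ha : (c * α : ZMod p) ≠ 0 := mul_ne_zero hc hα
    set S := ∑ n : ZMod p, ZMod.stdAddChar (c * α * n ^ 2 + d * β * n) with hS
    have hgauss := aux_gauss p hp hodd ha (d * β)
    have hz : ((p : ℂ)⁻¹ * S) * (starRingEnd ℂ) ((p : ℂ)⁻¹ * S) = ((p : ℝ)⁻¹ : ℂ) := by
      rw [map_mul, map_inv₀, Complex.conj_natCast]
      rw [show ((p : ℂ)⁻¹ * S) * ((p : ℂ)⁻¹ * (starRingEnd ℂ) S)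
        = (p : ℂ)⁻¹ * (p : ℂ)⁻¹ * (S * (starRingEnd ℂ) S) by ring, hgauss]
      push_cast
      field_simp
    have habs : ‖(p : ℂ)⁻¹ * S‖ ^ 2 = (p : ℝ)⁻¹ := by
      have := Complex.mul_conj ((p : ℂ)⁻¹ * S)
      rw [hz] at this
      have h' : Complex.normSq ((p : ℂ)⁻¹ * S) = (p : ℝ)⁻¹ := by
        exact_mod_cast this.symm
      rw [Complex.sq_norm]
      exact h'
    rw [habs]
    -- count = 1
    set n0 : ZMod p := (c + d * c⁻¹) * 2⁻¹ with hn0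
    set m0 : ZMod p := n0 - c with hm0
    have hcount : (Finset.univ.filter fun nm : ZMod p × ZMod p =>
        c = nm.1 - nm.2 ∧ d = nm.1 ^ 2 - nm.2 ^ 2) = {(n0, m0)} := by
      ext nm
      simp only [Finset.mem_filter, Finset.mem_univ, true_and, Finset.mem_singleton,
        Prod.ext_iff]
      constructor
      · rintro ⟨h1, hd2⟩
        have hsum2 : c * (nm.1 + nm.2) = d := by rw [hd2, h1]; ring
        have hnpm : nm.1 + nm.2 = d * c⁻¹ := by
          field_simp at hsum2 ⊢
          linear_combination hsum2
        have h2n : nm.1 * 2 = c + d * c⁻¹ := by linear_combination -h1 + hnpm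
        have hn : nm.1 = n0 := by
          rw [hn0, eq_mul_inv_iff_mul_eq₀ h2]
          exact h2n
        refine ⟨hn, ?_⟩
        rw [hm0, ← hn]
        linear_combination h1
      · rintro ⟨h1, h2'⟩
        rw [h1, h2', hm0]
        constructor
        · ring
        · rw [hn0]
          field_simp
          ring
    rw [hcount, Finset.card_singleton]
    simp
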